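/- Let G be a finite connected non-vertex-transitive graph with no terminal orbit. Then every proper nonempty union of orbits of Aut(G) induces a disconnected subgraph of G. -/

import Mathlib

/-- The orbit of a vertex under the automorphism group of `G`. -/
def GraphOrbit {V : Type*} (G : SimpleGraph V) (v : V) : Set V :=
  {u | ∃ φ : G ≃g G, φ v = u}

/-- `O` is an orbit of `Aut(G)` on vertices. -/
def IsOrbit {V : Type*} (G : SimpleGraph V) (O : Set V) : Prop :=
  ∃ v, O = GraphOrbit G v

/-- `O` is a terminal orbit-candidate set: for every `u ∉ O` and `v ∈ O` there is a
`u`–`v` path meeting `O` only in `v`. -/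
def IsTerminalSet {V : Type*} (G : SimpleGraph V) (O : Set V) : Prop :=
  ∀ u ∉ O, ∀ v ∈ O, ∃ p : G.Walk u v, p.IsPath ∧ {x | x ∈ p.support} ∩ O = {v}

/-- `G` is vertex-transitive. -/
def IsVertexTransitive {V : Type*} (G : SimpleGraph V) : Prop :=
  ∀ u v : V, ∃ φ : G ≃g G, φ u = v

open SimpleGraph

lemma mem_graphOrbit_self {V : Type*} (G : SimpleGraph V) (v : V) : v ∈ GraphOrbit G v :=
  ⟨RelIso.refl _, rfl⟩

lemma apply_mem_graphOrbit {V : Type*} {G : SimpleGraph V} (φ : G ≃g G) {v x : V}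
    (hx : x ∈ GraphOrbit G v) : φ x ∈ GraphOrbit G v := by
  obtain ⟨ψ, rfl⟩ := hx
  exact ⟨ψ.trans φ, rfl⟩

lemma graphOrbit_eq {V : Type*} {G : SimpleGraph V} {u v : V} (h : u ∈ GraphOrbit G v) :
    GraphOrbit G u = GraphOrbit G v := by
  obtain ⟨ψ, rfl⟩ := h
  ext x
  constructor
  · rintro ⟨φ, rfl⟩; exact ⟨ψ.trans φ, rfl⟩
  · rintro ⟨φ, rfl⟩
    refine ⟨ψ.symm.trans φ, ?_⟩
    show φ (ψ.symm (ψ _)) = φ _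
    simp

lemma dist_iso {V : Type*} {G : SimpleGraph V} (hconn : G.Connected) (φ : G ≃g G) (u v : V) :
    G.dist (φ u) (φ v) = G.dist u v := by
  have key : ∀ (ψ : G ≃g G) (a b : V), G.dist (ψ a) (ψ b) ≤ G.dist a b := by
    intro ψ a b
    obtain ⟨w, hw⟩ := (hconn a b).exists_walk_length_eq_dist
    calc G.dist (ψ a) (ψ b) ≤ (w.map ψ.toHom).length := dist_le _
      _ = G.dist a b := by rw [Walk.length_map, hw]
  refine le_antisymm (key φ u v) ?_
  have h2 := key φ.symm (φ u) (φ v)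
  simpa using h2

theorem aux_terminal {V : Type*} [Fintype V] (G : SimpleGraph V) (hconn : G.Connected)
    (A : Set V) (hAinv : ∀ (φ : G ≃g G) (x : V), x ∈ A → φ x ∈ A)
    (hAne : A.Nonempty) (hAcne : Aᶜ.Nonempty)
    (hAconn : (G.induce A).Connected) :
    ∃ O : Set V, IsOrbit G O ∧ IsTerminalSet G O := by
  classical
  set AF : Finset V := Finset.univ.filter (· ∈ A) with hAF
  have hAFne : AF.Nonempty := ⟨hAne.choose, by simp [hAF, hAne.choose_spec]⟩
  have himgne : ∀ x : V, (AF.image (G.dist x)).Nonempty := fun _ => hAFne.image _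
  set d : V → ℕ := fun x => (AF.image (G.dist x)).min' (himgne x) with hd
  have hd_le : ∀ x, ∀ a ∈ A, d x ≤ G.dist x a := by
    intro x a ha
    exact Finset.min'_le _ _ (Finset.mem_image_of_mem _ (by simp [hAF, ha]))
  have hd_attain : ∀ x, ∃ a ∈ A, G.dist x a = d x := by
    intro x
    obtain ⟨a, ha, h⟩ := Finset.mem_image.mp (Finset.min'_mem _ (himgne x))
    exact ⟨a, by simpa [hAF] using ha, h⟩
  have hd_zero : ∀ x, d x = 0 ↔ x ∈ A := by
    intro x
    constructor
    · intro h
      obtain ⟨a, ha, hda⟩ := hd_attain x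
      have : x = a := (hconn.dist_eq_zero_iff).mp (by omega)
      exact this ▸ ha
    · intro hx
      have h1 : d x ≤ G.dist x x := hd_le x x hx
      simp only [SimpleGraph.dist_self] at h1
      omega
  have hd_iso : ∀ (φ : G ≃g G) (x : V), d (φ x) = d x := by
    intro φ x
    obtain ⟨a, ha, hda⟩ := hd_attain x
    obtain ⟨b, hb, hdb⟩ := hd_attain (φ x)
    refine le_antisymm ?_ ?_
    · calc d (φ x) ≤ G.dist (φ x) (φ a) := hd_le _ _ (hAinv φ a ha)
        _ = G.dist x a := dist_iso hconn φ x a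
        _ = d x := hda
    · have hsb : φ.symm b ∈ A := hAinv φ.symm b hb
      calc d x ≤ G.dist x (φ.symm b) := hd_le _ _ hsb
        _ = G.dist (φ x) (φ (φ.symm b)) := (dist_iso hconn φ x (φ.symm b)).symm
        _ = G.dist (φ x) b := by simp
        _ = d (φ x) := hdb
  obtain ⟨x0, _, hx0c⟩ := Finset.exists_max_image Finset.univ d ⟨hAne.choose, Finset.mem_univ _⟩
  have hx0max : ∀ y, d y ≤ d x0 := fun y => hx0c y (Finset.mem_univ y)
  have hm_pos : 0 < d x0 := by
    obtain ⟨b, hb⟩ := hAcne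
    have hdb : d b ≠ 0 := fun h => hb ((hd_zero b).mp h)
    have := hx0max b
    omega
  set O : Set V := GraphOrbit G x0 with hO
  have hOd : ∀ z ∈ O, d z = d x0 := by
    rintro z ⟨φ, rfl⟩
    exact hd_iso φ x0
  have hnotO : ∀ z, d z < d x0 → z ∉ O := fun z h hz => by
    have := hOd z hz; omega
  -- key walk lemma
  have key : ∀ n x, d x ≤ n →
      ∃ a, a ∈ A ∧ ∃ w : G.Walk x a, ∀ y ∈ w.support, d y < d x ∨ y = x := by
    intro n
    induction n with
    | zero =>
      intro x hx
      have hxA : x ∈ A := (hd_zero x).mp (Nat.le_zero.mp hx)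
      exact ⟨x, hxA, Walk.nil, by simp⟩
    | succ n ih =>
      intro x hx
      by_cases h0 : d x = 0
      · exact ⟨x, (hd_zero x).mp h0, Walk.nil, by simp⟩
      · obtain ⟨a, ha, hda⟩ := hd_attain x
        obtain ⟨w, hw⟩ := (hconn x a).exists_walk_length_eq_dist
        cases w with
        | nil =>
          exfalso
          simp only [Walk.length_nil] at hw
          omega
        | @cons _ y _ hadj p =>
          have hlen : p.length + 1 = d x := by
            simpa [hda] using hw
          have hdy : d y ≤ p.length := le_trans (hd_le y a ha) (dist_le p)
          obtain ⟨b, hb, w', hw'⟩ := ih y (by omega)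
          refine ⟨b, hb, Walk.cons hadj w', ?_⟩
          intro z hz
          rw [Walk.support_cons] at hz
          rcases List.mem_cons.mp hz with rfl | hz'
          · exact Or.inr rfl
          · left
            rcases hw' z hz' with h | rfl
            · omega
            · omega
  have keyw : ∀ x, ∃ a, a ∈ A ∧ ∃ w : G.Walk x a, ∀ y ∈ w.support, d y < d x ∨ y = x :=
    fun x => key (d x) x le_rfl
  refine ⟨O, ⟨x0, rfl⟩, ?_⟩
  intro u hu v hv
  obtain ⟨a, ha, wv, hwv⟩ := keyw v
  obtain ⟨b, hb, wu, hwu⟩ := keyw u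
  obtain ⟨wm⟩ := hAconn ⟨b, hb⟩ ⟨a, ha⟩
  set wmG := wm.map (SimpleGraph.Embedding.induce A).toHom with hwmGdef
  have hwmGA : ∀ z ∈ wmG.support, z ∈ A := by
    intro z hz
    rw [hwmGdef, Walk.support_map] at hz
    obtain ⟨⟨z', hz'⟩, _, rfl⟩ := List.mem_map.mp hz
    exact hz'
  set p := wu.append (wmG.append wv.reverse) with hp
  have hsup : ∀ z ∈ (p.toPath : G.Walk u v).support, z ∈ O → z = v := by
    intro z hz hzO
    have hz' : z ∈ p.support := Walk.support_toPath_subset p hz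
    rw [hp] at hz'
    replace hz' := Or.imp_right (Walk.mem_support_append_iff ..).mp ((Walk.mem_support_append_iff ..).mp hz')
    rcases hz' with hz1 | hz2 | hz3
    · rcases hwu z hz1 with h | rfl
      · exact absurd hzO (hnotO z (lt_of_lt_of_le h (hx0max u)))
      · exact absurd hzO hu
    · exfalso
      have hzA : z ∈ A := hwmGA z hz2
      have : d z = 0 := (hd_zero z).mpr hzA
      exact hnotO z (by omega) hzO
    · replace hz3 : z ∈ (wv.reverse : G.Walk a v).support := hz3
      rw [Walk.support_reverse, List.mem_reverse] at hz3
      rcases hwv z hz3 with h | rfl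
      · have hdv : d v = d x0 := hOd v hv
        exact absurd hzO (hnotO z (by omega))
      · rfl
  refine ⟨p.toPath, p.toPath.2, ?_⟩
  ext x
  simp only [Set.mem_inter_iff, Set.mem_setOf_eq, Set.mem_singleton_iff]
  constructor
  · rintro ⟨hx1, hx2⟩
    exact hsup x hx1 hx2
  · rintro rfl
    exact ⟨Walk.end_mem_support _, hv⟩

theorem stmt5 {V : Type*} [Fintype V] (G : SimpleGraph V) (hconn : G.Connected)
    (hnt : ¬ IsVertexTransitive G)
    (hnoterm : ¬ ∃ O : Set V, IsOrbit G O ∧ IsTerminalSet G O) :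
    ∀ S : Set (Set V), (∀ O ∈ S, IsOrbit G O) → S.Nonempty →
      (∃ O : Set V, IsOrbit G O ∧ O ∉ S) →
      ¬ (G.induce (⋃₀ S)).Connected := by
  rintro S hS hSne ⟨O, ⟨w, rfl⟩, hOS⟩ hconn'
  apply hnoterm
  apply aux_terminal G hconn (⋃₀ S)
  · rintro φ x ⟨T, hT, hxT⟩
    obtain ⟨t, rfl⟩ := hS T hT
    exact ⟨GraphOrbit G t, hT, apply_mem_graphOrbit φ hxT⟩
  · obtain ⟨T, hT⟩ := hSne
    obtain ⟨t, rfl⟩ := hS T hT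
    exact ⟨t, GraphOrbit G t, hT, mem_graphOrbit_self G t⟩
  · refine ⟨w, ?_⟩
    rintro hw
    obtain ⟨T, hT, hwT⟩ := hw
    obtain ⟨t, rfl⟩ := hS T hT
    have h1 : GraphOrbit G w = GraphOrbit G t := by
      have h2 := graphOrbit_eq hwT
      have h3 := graphOrbit_eq (mem_graphOrbit_self G w)
      rw [← h2]
    exact hOS (h1 ▸ hT)
  · exact hconn'
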